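/- For every Λ > 0, the supremum over σ > 0 of the hazard rate h(σ,Λ)/(1 - H(σ,Λ)) is finite. -/

import Mathlib

open Real MeasureTheory Set Filter Topology

noncomputable def fph (σ x : ℝ) : ℝ :=
  x * Real.exp (-(x - σ)^2 / (2*σ)) / Real.sqrt (2*Real.pi*σ^3)

noncomputable def erfc (z : ℝ) : ℝ :=
  (2 / Real.sqrt Real.pi) * ∫ t in Set.Ioi z, Real.exp (-t^2)

noncomputable def fpH (σ x : ℝ) : ℝ :=
  (1/2) * (erfc ((x-σ)/Real.sqrt (2*σ)) + Real.exp (2*x) * erfc ((x+σ)/Real.sqrt (2*σ)))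

noncomputable def kap (σ y x : ℝ) : ℝ :=
  Real.exp (-(y - x + σ)^2/(2*σ)) / Real.sqrt (2*Real.pi*σ) * (1 - Real.exp (-(2*x*y)/σ))

lemma intE : Integrable (fun t : ℝ => Real.exp (-t^2)) := by
  have := integrable_exp_neg_mul_sq (b := 1) one_pos
  simpa using this

lemma intE_full : (∫ t : ℝ, Real.exp (-t^2)) = Real.sqrt π := by
  have := integral_gaussian 1
  simpa using this

lemma shiftIoi (f : ℝ → ℝ) (z c : ℝ) :
    (∫ t in Set.Ioi (z + c), f t) = ∫ s in Set.Ioi z, f (s + c) := by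
  have A : MeasurableEmbedding (fun x : ℝ => x + c) :=
    (Homeomorph.addRight c).isClosedEmbedding.measurableEmbedding
  have h := A.setIntegral_map (μ := volume) f (Set.Ioi (z + c))
  rw [show Measure.map (fun x : ℝ => x + c) volume = volume from
    map_add_right_eq_self volume c] at h
  have hp : (fun x : ℝ => x + c) ⁻¹' Set.Ioi (z + c) = Set.Ioi z := by
    ext x; simp
  rw [h, hp]

lemma reflIoi (z : ℝ) :
    (∫ t in Set.Ioi (-z), Real.exp (-t^2)) = ∫ t in Set.Iic z, Real.exp (-t^2) := by
  rw [← integral_comp_neg_Iic z (fun t => Real.exp (-t^2))]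
  congr 1; ext x; ring_nf

lemma sumIoi (z : ℝ) :
    (∫ t in Set.Ioi (-z), Real.exp (-t^2)) + (∫ t in Set.Ioi z, Real.exp (-t^2))
      = Real.sqrt π := by
  rw [reflIoi, intervalIntegral.integral_Iic_add_Ioi intE.integrableOn intE.integrableOn,
    intE_full]

lemma int_shift_exp (c : ℝ) : Integrable (fun s : ℝ => Real.exp (-(s+c)^2)) := by
  have A : MeasurePreserving (fun x : ℝ => x + c) volume volume :=
    measurePreserving_add_right volume c
  exact (A.integrable_comp_emb (measurableEmbedding_addRight c)).mpr intE

lemma erfc_neg (z : ℝ) : erfc (-z) = 2 - erfc z := by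
  have hsp : (0:ℝ) < Real.sqrt π := Real.sqrt_pos.mpr Real.pi_pos
  have h := sumIoi z
  rw [erfc, erfc]
  have : (∫ t in Set.Ioi (-z), Real.exp (-t^2))
      = Real.sqrt π - ∫ t in Set.Ioi z, Real.exp (-t^2) := by linarith
  rw [this]
  field_simp

lemma key2 (a c x : ℝ) (hca : 2*c*a = c^2 - 2*x) :
    erfc (-a) - Real.exp (2*x) * erfc (-a + c)
      = (2 / Real.sqrt π) * ∫ s in Set.Ioi (-a),
          (Real.exp (-s^2) - Real.exp (-s^2 - 2*c*(s+a))) := by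
  have h1 : erfc (-a + c) = (2 / Real.sqrt π) * ∫ s in Set.Ioi (-a), Real.exp (-(s+c)^2) := by
    rw [erfc, shiftIoi (fun t => Real.exp (-t^2)) (-a) c]
  have h2 : (∫ s in Set.Ioi (-a), (Real.exp (-s^2) - Real.exp (-s^2 - 2*c*(s+a))))
      = (∫ s in Set.Ioi (-a), Real.exp (-s^2))
        - Real.exp (2*x) * ∫ s in Set.Ioi (-a), Real.exp (-(s+c)^2) := by
    rw [← integral_const_mul, ← integral_sub intE.integrableOn
      (((int_shift_exp c).const_mul (Real.exp (2*x))).integrableOn)]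
    congr 1; ext s
    have he : Real.exp (-s^2 - 2*c*(s+a)) = Real.exp (2*x) * Real.exp (-(s+c)^2) := by
      rw [← Real.exp_add]
      exact congrArg Real.exp (by linear_combination -hca)
    rw [he]
  rw [h1, h2, erfc]
  ring

lemma g_eq (a c : ℝ) :
    (fun s : ℝ => Real.exp (-s^2) - Real.exp (-s^2 - 2*c*(s+a)))
      = (fun s : ℝ => Real.exp (-s^2) - Real.exp (c^2 - 2*c*a) * Real.exp (-(s+c)^2)) := by
  funext s
  congr 1
  rw [← Real.exp_add]
  exact congrArg Real.exp (by ring)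

lemma g_intOn (a c z : ℝ) :
    IntegrableOn (fun s : ℝ => Real.exp (-s^2) - Real.exp (-s^2 - 2*c*(s+a)))
      (Set.Ioi z) := by
  rw [g_eq]
  exact (intE.sub ((int_shift_exp c).const_mul (Real.exp (c^2 - 2*c*a)))).integrableOn

lemma lowerJ (a c p r m : ℝ) (hpr : p ≤ r) (hm0 : 0 ≤ m) (hc : 0 < c)
    (hsub : Set.Ioc p r ⊆ Set.Ioi (-a))
    (hm : ∀ s ∈ Set.Ioc p r, m ≤ Real.exp (-s^2) - Real.exp (-s^2 - 2*c*(s+a))) :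
    m * (r - p) ≤ ∫ s in Set.Ioi (-a),
      (Real.exp (-s^2) - Real.exp (-s^2 - 2*c*(s+a))) := by
  have hint := g_intOn a c (-a)
  have hnn : 0 ≤ᵐ[volume.restrict (Set.Ioi (-a))]
      (fun s : ℝ => Real.exp (-s^2) - Real.exp (-s^2 - 2*c*(s+a))) := by
    filter_upwards [ae_restrict_mem measurableSet_Ioi] with s hs
    have hsa : (0:ℝ) < s + a := by simpa [neg_lt_iff_pos_add] using hs
    have : Real.exp (-s^2 - 2*c*(s+a)) ≤ Real.exp (-s^2) := by
      apply Real.exp_le_exp.mpr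
      nlinarith
    simpa using this
  have h1 : (∫ s in Set.Ioc p r, (Real.exp (-s^2) - Real.exp (-s^2 - 2*c*(s+a))))
      ≤ ∫ s in Set.Ioi (-a), (Real.exp (-s^2) - Real.exp (-s^2 - 2*c*(s+a))) :=
    setIntegral_mono_set hint hnn (HasSubset.Subset.eventuallyLE hsub)
  have h2 := setIntegral_ge_of_const_le_real (μ := volume) measurableSet_Ioc
    (by simp) hm (hint.mono_set hsub)
  calc m * (r - p) = m * (volume (Set.Ioc p r)).toReal := by
        rw [Real.volume_Ioc, ENNReal.toReal_ofReal (by linarith)]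
    _ ≤ _ := h2.trans h1

lemma exp_neg_le (v : ℝ) : (1+v) * Real.exp (-v) ≤ 1 := by
  have h := Real.add_one_le_exp v
  have h2 : (v+1) * Real.exp (-v) ≤ Real.exp v * Real.exp (-v) :=
    mul_le_mul_of_nonneg_right h (Real.exp_nonneg _)
  rw [← Real.exp_add] at h2
  simp at h2
  linarith

set_option maxHeartbeats 10000000 in
theorem hazard_rate_bounded (Λ : ℝ) (hΛ : 0 < Λ) :
    ∃ M : ℝ, ∀ σ : ℝ, 0 < σ → fph σ Λ / (1 - fpH σ Λ) ≤ M := by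
  set x := Λ with hxdef
  refine ⟨max (18*Real.exp (x+9)/x^2) (4*Real.exp 2), fun σ hσ => ?_⟩
  set M := max (18*Real.exp (x+9)/x^2) (4*Real.exp 2) with hMdef
  have hM0 : 0 < M := lt_of_lt_of_le (by positivity) (le_max_right _ _)
  set q := Real.sqrt (2*σ) with hqdef
  have hq : 0 < q := Real.sqrt_pos.mpr (by linarith)
  have hq2 : q^2 = 2*σ := Real.sq_sqrt (by linarith)
  set a := (x-σ)/q with hadef
  set c := 2*x/q with hcdef
  have hc : 0 < c := by positivity
  have hcq : c*q = 2*x := by rw [hcdef]; field_simp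
  have haq : a*q = x - σ := by rw [hadef]; field_simp
  have hca : 2*c*a = c^2 - 2*x := by
    rw [hadef, hcdef]; field_simp; linear_combination hq2
  have hsp : (0:ℝ) < Real.sqrt π := Real.sqrt_pos.mpr Real.pi_pos
  set J := ∫ s in Set.Ioi (-a), (Real.exp (-s^2) - Real.exp (-s^2 - 2*c*(s+a))) with hJdef
  -- identity for 1 - fpH
  have hid : 1 - fpH σ x = (1/Real.sqrt π) * J := by
    have hb : (x+σ)/q = -a + c := by rw [hadef, hcdef]; field_simp; ring
    have hk := key2 a c x hca
    have hn := erfc_neg a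
    have h3 : (2/Real.sqrt π) * J = 2 * ((1/Real.sqrt π) * J) := by ring
    rw [fpH, ← hqdef, ← hadef, hb]
    rw [h3] at hk
    linarith
  -- formula for fph
  have hfph : fph σ x = (1/Real.sqrt π) * (x * Real.exp (-a^2) / (σ * q)) := by
    have hsqrt : Real.sqrt (2*π*σ^3) = Real.sqrt π * (σ * q) := by
      rw [hqdef, show 2*π*σ^3 = π * (σ^2 * (2*σ)) by ring,
        Real.sqrt_mul (le_of_lt Real.pi_pos), Real.sqrt_mul (sq_nonneg σ),
        Real.sqrt_sq hσ.le]
    have hexp : -(x-σ)^2 / (2*σ) = -a^2 := by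
      rw [hadef, div_pow, ← hq2]; field_simp
    rw [fph, hsqrt, hexp]
    field_simp
  clear_value q a c J M
  -- the core inequality
  have hinner : x * Real.exp (-a^2) / (σ * q) ≤ M * J := by
    rw [div_le_iff₀ (by positivity)]
    -- goal : x * Real.exp (-a^2) ≤ M * J * (σ * q)
    rcases le_or_gt (-1:ℝ) a with ha1 | ha1
    · -- Case 1 : a ≥ -1
      have hE2le : Real.exp (-(2*c)) ≤ 1 := by
        nlinarith [exp_neg_le (2*c), Real.exp_pos (-(2*c))]
      have hm0 : (0:ℝ) ≤ Real.exp (-9) * (1 - Real.exp (-(2*c))) := by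
        have := Real.exp_nonneg (-9:ℝ); nlinarith
      have hsub : Set.Ioc (2:ℝ) 3 ⊆ Set.Ioi (-a) := by
        intro s hs
        simp only [Set.mem_Ioc, Set.mem_Ioi] at *
        linarith [hs.1]
      have hpt : ∀ s ∈ Set.Ioc (2:ℝ) 3, Real.exp (-9) * (1 - Real.exp (-(2*c)))
          ≤ Real.exp (-s^2) - Real.exp (-s^2 - 2*c*(s+a)) := by
        intro s hs
        obtain ⟨hs1, hs2⟩ := hs
        have hrw : Real.exp (-s^2) - Real.exp (-s^2 - 2*c*(s+a))
            = Real.exp (-s^2) * (1 - Real.exp (-(2*c*(s+a)))) := by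
          have h := congrArg Real.exp (show -s^2 + -(2*c*(s+a)) = -s^2 - 2*c*(s+a) by ring)
          rw [mul_sub, mul_one, ← Real.exp_add, h]
        rw [hrw]
        apply mul_le_mul
        · exact Real.exp_le_exp.mpr (by nlinarith)
        · have h2 : Real.exp (-(2*c*(s+a))) ≤ Real.exp (-(2*c)) :=
            Real.exp_le_exp.mpr (by nlinarith)
          linarith
        · linarith [hE2le]
        · exact Real.exp_nonneg _
      have hLJ := lowerJ a c 2 3 _ (by norm_num) hm0 hc hsub hpt
      have hJ' : Real.exp (-9) * (1 - Real.exp (-(2*c))) ≤ J := by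
        rw [← hJdef] at hLJ; norm_num at hLJ; exact hLJ
      have hJ0 : 0 ≤ J := le_trans hm0 hJ'
      -- exponential facts
      have hAT : Real.exp (-a^2) * Real.exp (c^2/4) ≤ Real.exp x := by
        rw [← Real.exp_add]
        apply Real.exp_le_exp.mpr
        have h1 : (a*q)^2 = (x-σ)^2 := by rw [haq]
        have h2 : (c*q)^2 = (2*x)^2 := by rw [hcq]
        nlinarith [h1, h2, hq2, sq_nonneg σ, (by positivity : (0:ℝ) < q^2)]
      have hT4 : c^2 ≤ 4*Real.exp (c^2/4) := by
        nlinarith [Real.add_one_le_exp (c^2/4)]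
      have hT64 : c^4 ≤ 64*Real.exp (c^2/4) := by
        have h8 := Real.add_one_le_exp (c^2/8)
        have hTT : Real.exp (c^2/4) = Real.exp (c^2/8) * Real.exp (c^2/8) := by
          rw [← Real.exp_add]; congr 1; ring
        nlinarith [h8, Real.exp_pos (c^2/8), hTT]
      have hc3 : c^3 ≤ 34*Real.exp (c^2/4) := by
        nlinarith [hT4, hT64, sq_nonneg (c - c^2)]
      have hm1 : Real.exp (-a^2)*c^2*(1+2*c) ≤ 72*Real.exp x := by
        have hA0 : (0:ℝ) < Real.exp (-a^2) := Real.exp_pos _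
        have p1 : Real.exp (-a^2)*c^2 ≤ 4*(Real.exp (-a^2)*Real.exp (c^2/4)) := by nlinarith
        have p2 : Real.exp (-a^2)*c^3 ≤ 34*(Real.exp (-a^2)*Real.exp (c^2/4)) := by nlinarith
        nlinarith
      have hm2 : 2*c ≤ (1+2*c)*(1-Real.exp (-(2*c))) := by
        nlinarith [exp_neg_le (2*c)]
      have hM1 : 18*Real.exp (x+9)/x^2 ≤ M := by rw [hMdef]; exact le_max_left _ _
      calc x * Real.exp (-a^2)
          ≤ (18*Real.exp (x+9)/x^2) * (Real.exp (-9)*(1-Real.exp (-(2*c)))) * (σ*q) := by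
            have he : Real.exp (x+9) * Real.exp (-9) = Real.exp x := by
              rw [← Real.exp_add]; congr 1; ring
            rw [div_mul_eq_mul_div, div_mul_eq_mul_div, le_div_iff₀ (by positivity)]
            -- x * exp(-a²) * x² ≤ 18*exp(x+9)*(exp(-9)*(1-E2))*(σ*q)
            have hs2 : σ*q*c^3 = 4*x^3 := by
              have h2 : (c*q)^3 = (2*x)^3 := by rw [hcq]
              linear_combination (1/2)*h2 - (q*c^3/2)*hq2
            have hpos : (0:ℝ) < c^2*(1+2*c) := by positivity
            have hkey : x^3*(Real.exp (-a^2)*c^2*(1+2*c))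
                ≤ 18*(Real.exp x*(1-Real.exp (-(2*c))))*(σ*q)*(c^2*(1+2*c)) := by
              have k1 : x^3*(Real.exp (-a^2)*c^2*(1+2*c)) ≤ x^3*(72*Real.exp x) :=
                mul_le_mul_of_nonneg_left hm1 (by positivity)
              have k2 : 18*Real.exp x*(σ*q*c^2)*(2*c)
                  ≤ 18*Real.exp x*(σ*q*c^2)*((1+2*c)*(1-Real.exp (-(2*c)))) := by
                apply mul_le_mul_of_nonneg_left hm2 (by positivity)
              have k3 : 36*Real.exp x*(σ*q*c^3) = 144*Real.exp x*x^3 := by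
                rw [hs2]; ring
              have k4 : (0:ℝ) ≤ Real.exp x*x^3 := by positivity
              nlinarith [k1, k2, k3, k4]
            have hfin := (mul_le_mul_iff_of_pos_right hpos).mp (by
              calc x^3*Real.exp (-a^2)*(c^2*(1+2*c))
                  = x^3*(Real.exp (-a^2)*c^2*(1+2*c)) := by ring
                _ ≤ 18*(Real.exp x*(1-Real.exp (-(2*c))))*(σ*q)*(c^2*(1+2*c)) := hkey
                _ = 18*Real.exp x*(1-Real.exp (-(2*c)))*(σ*q)*(c^2*(1+2*c)) := by ring)
            calc x*Real.exp (-a^2)*x^2 = x^3*Real.exp (-a^2) := by ring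
              _ ≤ 18*Real.exp x*(1-Real.exp (-(2*c)))*(σ*q) := hfin
              _ = 18*Real.exp (x+9)*(Real.exp (-9)*(1-Real.exp (-(2*c))))*(σ*q) := by
                  rw [← he]; ring
        _ ≤ (18*Real.exp (x+9)/x^2) * J * (σ*q) := by
            have hC : (0:ℝ) ≤ 18*Real.exp (x+9)/x^2 := by positivity
            have hS : (0:ℝ) ≤ σ*q := by positivity
            calc (18*Real.exp (x+9)/x^2) * (Real.exp (-9)*(1-Real.exp (-(2*c)))) * (σ*q)
                = ((18*Real.exp (x+9)/x^2) * (σ*q)) * (Real.exp (-9)*(1-Real.exp (-(2*c)))) := by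
                  ring
              _ ≤ ((18*Real.exp (x+9)/x^2) * (σ*q)) * J :=
mul_le_mul_of_nonneg_left hJ' (by positivity)
              _ = (18*Real.exp (x+9)/x^2) * J * (σ*q) := by ring
        _ ≤ M * J * (σ*q) := by
            have : (0:ℝ) ≤ J * (σ*q) := by positivity
            calc (18*Real.exp (x+9)/x^2) * J * (σ*q)
                = (18*Real.exp (x+9)/x^2) * (J * (σ*q)) := by ring
              _ ≤ M * (J * (σ*q)) := mul_le_mul_of_nonneg_right hM1 this
              _ = M * J * (σ*q) := by ring
    · -- Case 2 : a < -1
      have hnb : (1:ℝ) < -a := by linarith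
      have hnb0 : (0:ℝ) < -a := by linarith
      set u : ℝ := 1/(4*(-a)) with hudef
      have hu : 0 < u := by positivity
      have hunb : u * (4*(-a)) = 1 := by
        rw [hudef]; exact one_div_mul_cancel (by positivity)
      have hnbq : 2*(-a) + c = q := by
        rw [hadef, hcdef]; field_simp; linear_combination -hq2
      clear_value u
      have hbltq : -a ≤ q := by linarith
      -- pointwise bound on Ioc (-a+u) (-a+2u)
      have hsub : Set.Ioc (-a+u) (-a+2*u) ⊆ Set.Ioi (-a) := by
        intro s hs
        simp only [Set.mem_Ioc, Set.mem_Ioi] at *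
        linarith [hs.1]
      have hm0 : (0:ℝ) ≤ Real.exp (-a^2) * Real.exp (-2) * (c/q) := by
        apply mul_nonneg (mul_nonneg (Real.exp_nonneg _) (Real.exp_nonneg _))
        exact div_nonneg hc.le hq.le
      have hpt : ∀ s ∈ Set.Ioc (-a+u) (-a+2*u),
          Real.exp (-a^2) * Real.exp (-2) * (c/q)
            ≤ Real.exp (-s^2) - Real.exp (-s^2 - 2*c*(s+a)) := by
        intro s hs
        obtain ⟨hs1, hs2⟩ := hs
        have hrw : Real.exp (-s^2) - Real.exp (-s^2 - 2*c*(s+a))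
            = Real.exp (-s^2) * (1 - Real.exp (-(2*c*(s+a)))) := by
          have h := congrArg Real.exp (show -s^2 + -(2*c*(s+a)) = -s^2 - 2*c*(s+a) by ring)
          rw [mul_sub, mul_one, ← Real.exp_add, h]
        rw [hrw]
        have hfac : c/q ≤ 1 - Real.exp (-(2*c*(s+a))) := by
          have e1 : (1 + 2*c*u)*Real.exp (-(2*c*u)) ≤ 1 := exp_neg_le _
          have e2 : Real.exp (-(2*c*(s+a))) ≤ Real.exp (-(2*c*u)) := by
            apply Real.exp_le_exp.mpr
            nlinarith [mul_le_mul_of_nonneg_left (show u ≤ s+a by linarith)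
              (by linarith : (0:ℝ) ≤ 2*c)]
          have hc4u : 4*(-a)*c*u = c := by linear_combination c*hunb
          have e1' : (2*(-a)) * ((1 + 2*c*u)*Real.exp (-(2*c*u))) ≤ (2*(-a)) * 1 :=
            mul_le_mul_of_nonneg_left e1 (by linarith)
          have eq1 : (2*(-a)) * ((1 + 2*c*u)*Real.exp (-(2*c*u)))
              = q * Real.exp (-(2*c*u)) := by
            have hqq : (2*(-a)) * (1 + 2*c*u) = q := by linear_combination hc4u + hnbq
            rw [← hqq]; ring
          have e2' : q * Real.exp (-(2*c*(s+a))) ≤ q * Real.exp (-(2*c*u)) :=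
            mul_le_mul_of_nonneg_left e2 hq.le
          have e3 : q * Real.exp (-(2*c*(s+a))) ≤ 2*(-a) := by linarith
          rw [div_le_iff₀ hq]
          nlinarith [e3, hnbq]
        have hgauss : Real.exp (-a^2) * Real.exp (-2) ≤ Real.exp (-s^2) := by
          rw [← Real.exp_add]
          apply Real.exp_le_exp.mpr
          have hs0 : 0 < s := by linarith
          have hsr : s ≤ -a + 2*u := hs2
          have hr2 : (-a + 2*u)^2 ≤ a^2 + 2 := by
            nlinarith [hunb, mul_pos hu hu,
              mul_pos (show (0:ℝ) < -a - 1 by linarith) hu]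
          nlinarith [hr2, mul_nonneg (sub_nonneg.mpr hsr)
            (by linarith : (0:ℝ) ≤ -a + 2*u + s)]
        have h1e : 1 - Real.exp (-(2*c*(s+a))) ≤ 1 := by
          have := Real.exp_pos (-(2*c*(s+a))); linarith
        apply mul_le_mul hgauss hfac
        · exact div_nonneg hc.le hq.le
        · exact Real.exp_nonneg _
      have hLJ := lowerJ a c (-a+u) (-a+2*u) _ (by linarith) hm0 hc hsub hpt
      have hJ' : Real.exp (-a^2) * Real.exp (-2) * (c/q) * u ≤ J := by
        rw [← hJdef] at hLJ
        calc Real.exp (-a^2) * Real.exp (-2) * (c/q) * u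
            = Real.exp (-a^2) * Real.exp (-2) * (c/q) * ((-a+2*u) - (-a+u)) := by ring
          _ ≤ J := hLJ
      have hJ0 : 0 ≤ J := le_trans (by positivity) hJ'
      have hM2 : 4*Real.exp 2 ≤ M := by rw [hMdef]; exact le_max_right _ _
      have hee : Real.exp 2 * Real.exp (-2) = 1 := by
        rw [← Real.exp_add]; norm_num
      have hcσ : c*σ = x*q := by
        rw [hcdef]; field_simp; linear_combination -hq2
      calc x * Real.exp (-a^2)
          ≤ (4*Real.exp 2) * (Real.exp (-a^2) * Real.exp (-2) * (c/q) * u) * (σ*q) := by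
            have hstep : (4*Real.exp 2) * (Real.exp (-a^2) * Real.exp (-2) * (c/q) * u) * (σ*q)
                = 4*Real.exp (-a^2)*c*u*σ := by
              field_simp
              linear_combination hee
            rw [hstep]
            have h16 : 4*c*u*σ*(4*(-a)) = 4*c*σ := by linear_combination (4*c*σ)*hunb
            have hnbx : (-a)*x ≤ c*σ := by
              rw [hcσ]; nlinarith
            have hx4 : x ≤ 4*c*u*σ := by nlinarith [h16, hnbx, hnb0]
            nlinarith [Real.exp_nonneg (-a^2), hx4]
        _ ≤ (4*Real.exp 2) * J * (σ*q) := by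
            have hS : (0:ℝ) ≤ σ*q := by positivity
            calc (4*Real.exp 2) * (Real.exp (-a^2) * Real.exp (-2) * (c/q) * u) * (σ*q)
                = ((4*Real.exp 2) * (σ*q)) * (Real.exp (-a^2) * Real.exp (-2) * (c/q) * u) := by
                  ring
              _ ≤ ((4*Real.exp 2) * (σ*q)) * J :=
                  mul_le_mul_of_nonneg_left hJ' (by positivity)
              _ = (4*Real.exp 2) * J * (σ*q) := by ring
        _ ≤ M * J * (σ*q) := by
            have : (0:ℝ) ≤ J * (σ*q) := by positivity
            calc (4*Real.exp 2) * J * (σ*q) = (4*Real.exp 2) * (J * (σ*q)) := by ring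
              _ ≤ M * (J * (σ*q)) := mul_le_mul_of_nonneg_right hM2 this
              _ = M * J * (σ*q) := by ring
  -- J positive enough: derive 1 - fpH > 0 later from fph ≤ M (1-fpH)
  have hle : fph σ x ≤ M * (1 - fpH σ x) := by
    calc fph σ x = (1/Real.sqrt π) * (x * Real.exp (-a^2) / (σ * q)) := hfph
      _ ≤ (1/Real.sqrt π) * (M * J) := by
          apply mul_le_mul_of_nonneg_left hinner (by positivity)
      _ = M * ((1/Real.sqrt π) * J) := by ring
      _ = M * (1 - fpH σ x) := by rw [← hid]
  have hfph0 : 0 < fph σ x := by rw [hfph]; positivity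
  have hden : 0 < 1 - fpH σ x := by
    by_contra h
    push_neg at h
    have hnp : M * (1 - fpH σ x) ≤ 0 := mul_nonpos_iff.mpr (Or.inl ⟨hM0.le, h⟩)
    linarith
  rw [div_le_iff₀ hden]
  linarith
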